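/- Let p_1,...,p_n be feasible for the improved optimization problem. Then for every k = 2,...,n−1 and every ℓ = 1,...,min{k−1, n−k}, ∏_{i=1}^k p_i ≤ (11k/4)^{k/2} · p_{k+ℓ}^{k−ℓ} · p_k^ℓ. -/

import Mathlib

open BigOperators

/-- Positive reals `p 1, ..., p n` are feasible for the improved optimization
problem (Program 3.5): Wilkinson's constraints
`∏_{i=1}^k p_i ≤ k^{k/2} p_k^k` for `k = 1, ..., n`, together with
`∏_{i=1}^k p_i ≤ k^k p_{k+ℓ}^{k-ℓ} (p_k + p_{k+ℓ})^ℓ / ((k-ℓ)^{(k-ℓ)/2} ℓ^{ℓ/2})`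
for `k = 2, ..., n-1` and `ℓ = 1, ..., min (k-1) (n-k)`. -/
def ImpOptFeasible (n : ℕ) (p : ℕ → ℝ) : Prop :=
  (∀ k : ℕ, 1 ≤ k → k ≤ n → 0 < p k) ∧
  (∀ k : ℕ, 1 ≤ k → k ≤ n →
    ∏ i ∈ Finset.Icc 1 k, p i ≤ (k : ℝ) ^ ((k : ℝ) / 2) * p k ^ k) ∧
  (∀ k ℓ : ℕ, 2 ≤ k → k + 1 ≤ n → 1 ≤ ℓ → ℓ + 1 ≤ k → k + ℓ ≤ n →
    ∏ i ∈ Finset.Icc 1 k, p i ≤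
      (k : ℝ) ^ (k : ℝ) * p (k + ℓ) ^ (k - ℓ) * (p k + p (k + ℓ)) ^ ℓ /
        (((k : ℝ) - (ℓ : ℝ)) ^ (((k : ℝ) - (ℓ : ℝ)) / 2) * (ℓ : ℝ) ^ ((ℓ : ℝ) / 2)))

/-- Reals `q 1, ..., q n` are feasible for the improved linear program
(Program 3.8): `∑_{i=1}^k q_i ≤ (k/2) ln k + k q_k` for `k = 1, ..., n`, and
`∑_{i=1}^k q_i ≤ (k/2) ln (11k/4) + (k-ℓ) q_{k+ℓ} + ℓ q_k`
for `k = 2, ..., n-1` and `ℓ = 1, ..., min (k-1) (n-k)`. -/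
def ImpLPFeasible (n : ℕ) (q : ℕ → ℝ) : Prop :=
  (∀ k : ℕ, 1 ≤ k → k ≤ n →
    ∑ i ∈ Finset.Icc 1 k, q i ≤ ((k : ℝ) / 2) * Real.log k + (k : ℝ) * q k) ∧
  (∀ k ℓ : ℕ, 2 ≤ k → k + 1 ≤ n → 1 ≤ ℓ → ℓ + 1 ≤ k → k + ℓ ≤ n →
    ∑ i ∈ Finset.Icc 1 k, q i ≤
      ((k : ℝ) / 2) * Real.log (11 * (k : ℝ) / 4) +
        ((k : ℝ) - (ℓ : ℝ)) * q (k + ℓ) + (ℓ : ℝ) * q k)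

section AuxiliaryLemmas

open Real Set


lemma concave_secant {f : ℝ → ℝ} (hf : ConcaveOn ℝ (Set.Icc (0:ℝ) 1) f)
    {u v t : ℝ} (hu : u ∈ Set.Icc (0:ℝ) 1) (ht : t ∈ Set.Icc (0:ℝ) 1)
    (huv : u < v) (hvt : v < t) :
    (v - u) * f t ≤ (t - u) * f v - (t - v) * f u := by
  have htu : 0 < t - u := by linarith
  have ha : 0 ≤ (t - v)/(t - u) := div_nonneg (by linarith) (by linarith)
  have hb : 0 ≤ (v - u)/(t - u) := div_nonneg (by linarith) (by linarith)
  have hab : (t - v)/(t - u) + (v - u)/(t - u) = 1 := by field_simp; ring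
  have h2 := hf.2 hu ht ha hb hab
  have hv : ((t - v)/(t - u)) • u + ((v - u)/(t - u)) • t = v := by
    simp only [smul_eq_mul]
    rw [div_mul_eq_mul_div, div_mul_eq_mul_div, ← add_div, div_eq_iff htu.ne']
    ring
  rw [hv, smul_eq_mul, smul_eq_mul] at h2
  rw [div_mul_eq_mul_div, div_mul_eq_mul_div, ← add_div, div_le_iff₀ htu] at h2
  nlinarith [h2]

lemma concave_affine_entropy (c : ℝ) :
    ConcaveOn ℝ (Set.Icc (0:ℝ) 1) (fun t : ℝ => 2*t*c + Real.binEntropy t) := by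
  have h1 : ConcaveOn ℝ (Set.Icc (0:ℝ) 1) (fun t : ℝ => 2*t*c) := by
    refine ⟨convex_Icc 0 1, ?_⟩
    intro x _ y _ a b _ _ _
    simp only [smul_eq_mul]
    apply le_of_eq
    ring
  exact h1.add Real.strictConcave_binEntropy.concaveOn

lemma secant_bound {c a' u v w : ℝ} (hc : 0 ≤ c)
    (hu0 : 0 ≤ u) (hw1 : w ≤ 1) (huv : u < v) (hvw : v < w)
    (hC1 : 2*v*c + Real.binEntropy v ≤ a')
    (hC2 : (w-u)*(2*v*c + Real.binEntropy v) - (w-v)*(2*u*c + Real.binEntropy u) ≤ (v-u)*a') :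
    ∀ t : ℝ, v ≤ t → t ≤ w → 2*t*c + Real.binEntropy t ≤ a' := by
  intro t hvt htw
  rcases eq_or_lt_of_le hvt with h|h
  · rw [← h]; exact hC1
  · have huI : u ∈ Set.Icc (0:ℝ) 1 := ⟨hu0, by linarith⟩
    have htI : t ∈ Set.Icc (0:ℝ) 1 := ⟨by linarith, by linarith⟩
    have S := concave_secant (concave_affine_entropy c) huI htI huv h
    have h1 : 0 ≤ (w - t) * ((v - u) * (a' - (2*v*c + Real.binEntropy v))) := by
      apply mul_nonneg (by linarith)
      apply mul_nonneg (by linarith) (by linarith)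
    have h2 : 0 ≤ (t - v) * ((v-u)*a' - ((w-u)*(2*v*c + Real.binEntropy v) - (w-v)*(2*u*c + Real.binEntropy u))) := by
      apply mul_nonneg (by linarith) (by linarith)
    nlinarith [S, h1, h2, mul_pos (sub_pos.mpr hvw) (sub_pos.mpr huv)]

lemma scaled_f (x : ℝ) (hx : 0 < x) (p q N : ℕ) (hp : 0 < p) (hq : 0 < q) (hpq : p + q = N) :
    (N:ℝ) * (2*((p:ℝ)/N)*Real.log (1+x) + Real.binEntropy ((p:ℝ)/N))
      = Real.log ((1+x)^(2*p) * ((N:ℝ)/p)^p * ((N:ℝ)/q)^q) := by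
  have hN : 0 < N := by omega
  have hNR : (0:ℝ) < N := by exact_mod_cast hN
  have hpR : (0:ℝ) < p := by exact_mod_cast hp
  have hqR : (0:ℝ) < q := by exact_mod_cast hq
  have hs : (q:ℝ) = (N:ℝ) - p := by
    have : (p:ℝ) + q = N := by exact_mod_cast hpq
    linarith
  have h1x : (0:ℝ) < 1 + x := by linarith
  have hbe : Real.binEntropy ((p:ℝ)/N)
      = ((p:ℝ)/N) * Real.log ((N:ℝ)/p) + ((q:ℝ)/N) * Real.log ((N:ℝ)/q) := by
    rw [Real.binEntropy]
    rw [show 1 - (p:ℝ)/N = (q:ℝ)/N by rw [hs]; field_simp]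
    rw [inv_div, inv_div]
  rw [hbe]
  rw [Real.log_mul (by positivity) (by positivity), Real.log_mul (by positivity) (by positivity),
    Real.log_pow, Real.log_pow, Real.log_pow]
  field_simp
  push_cast
  ring
lemma pow_split (x : ℝ) (n : ℕ) (h : 256 < n) : x ^ n = (x ^ (n / 2)) ^ 2 * x ^ (n % 2) := by
  rw [← pow_mul, ← pow_add, Nat.div_add_mod']
lemma piece_lemma (N pu pv pw qu qv A B C α β : ℕ)
    (hpu : 0 < pu) (hCd : pu + C = pv) (hBd : pv + B = pw) (hAd : pu + A = pw)
    (hwN : pw ≤ N) (hqu : pu + qu = N) (hqv : pv + qv = N)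
    (hα : 0 < α) (hαβ : α < β)
    (hC0 : 0 < C) (hB0 : 0 < B)
    (hAcond : ((4:ℝ)/11)^N ≤ ((α:ℝ)/β)^(2*qv))
    (hC1 : (1+(α:ℝ)/β)^(2*pv) * ((N:ℝ)/pv)^pv * ((N:ℝ)/qv)^qv ≤ ((11:ℝ)/4)^N)
    (hC2 : ((1+(α:ℝ)/β)^(2*pv) * ((N:ℝ)/pv)^pv * ((N:ℝ)/qv)^qv)^A ≤
        ((11:ℝ)/4)^(C*N) * ((1+(α:ℝ)/β)^(2*pu) * ((N:ℝ)/pu)^pu * ((N:ℝ)/qu)^qu)^B) :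
    ∀ t : ℝ, (pv:ℝ)/N ≤ t → t ≤ (pw:ℝ)/N →
      ((4:ℝ)/11) ≤ ((α:ℝ)/β) ^ (2*(1-t)) ∧
      2*t*Real.log (1+(α:ℝ)/β) + Real.binEntropy t ≤ Real.log ((11:ℝ)/4) := by
  have hN : 0 < N := by omega
  have hNR : (0:ℝ) < N := by exact_mod_cast hN
  have hpv : 0 < pv := by omega
  have hqv0 : 0 < qv := by omega
  have hqu0 : 0 < qu := by omega
  have hβR : (0:ℝ) < β := by exact_mod_cast (by omega : 0 < β)
  have hx0 : (0:ℝ) < (α:ℝ)/β := by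
    apply div_pos _ hβR
    exact_mod_cast hα
  have hx1 : (α:ℝ)/β < 1 := by
    rw [div_lt_one hβR]
    exact_mod_cast hαβ
  set x : ℝ := (α:ℝ)/β with hxdef
  set Pv : ℝ := (1+x)^(2*pv) * ((N:ℝ)/pv)^pv * ((N:ℝ)/qv)^qv with hPvdef
  set Pu : ℝ := (1+x)^(2*pu) * ((N:ℝ)/pu)^pu * ((N:ℝ)/qu)^qu with hPudef
  have hPvpos : (0:ℝ) < Pv := by rw [hPvdef]; positivity
  have hPupos : (0:ℝ) < Pu := by rw [hPudef]; positivity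
  have hc : 0 ≤ Real.log (1+x) := Real.log_nonneg (by linarith)
  have hfv0 := scaled_f x hx0 pv qv N hpv hqv0 hqv
  have hfu0 := scaled_f x hx0 pu qu N hpu hqu0 hqu
  rw [← hPvdef] at hfv0
  rw [← hPudef] at hfu0
  clear_value Pv Pu
  intro t hvt htw
  constructor
  · -- A condition
    have hqvR : (qv:ℝ) = (N:ℝ) - pv := by
      have : (pv:ℝ) + qv = N := by exact_mod_cast hqv
      linarith
    have hexp : 2*(1-t) ≤ (2*qv : ℕ) / (N:ℝ) := by
      have htv2 := hvt
      rw [div_le_iff₀ hNR] at htv2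
      push_cast
      rw [hqvR, le_div_iff₀ hNR]
      nlinarith [htv2]
    have hy : ((4:ℝ)/11) ≤ x ^ ((2*qv : ℕ) / (N:ℝ)) := by
      apply le_of_pow_le_pow_left₀ hN.ne' (Real.rpow_nonneg hx0.le _)
      calc ((4:ℝ)/11)^N ≤ x^(2*qv) := hAcond
        _ = (x ^ ((2*qv : ℕ) / (N:ℝ)))^N := by
            rw [← Real.rpow_natCast (x ^ ((2*qv : ℕ) / (N:ℝ))) N, ← Real.rpow_mul hx0.le,
              div_mul_cancel₀, Real.rpow_natCast]
            exact hNR.ne'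
    calc ((4:ℝ)/11) ≤ x ^ ((2*qv : ℕ) / (N:ℝ)) := hy
      _ ≤ x ^ (2*(1-t)) := Real.rpow_le_rpow_of_exponent_ge hx0 hx1.le hexp
  · -- B condition
    have hfv := hfv0
    have hfu := hfu0
    set Fv : ℝ := 2*((pv:ℝ)/N)*Real.log (1+x) + Real.binEntropy ((pv:ℝ)/N) with hFv
    set Fu : ℝ := 2*((pu:ℝ)/N)*Real.log (1+x) + Real.binEntropy ((pu:ℝ)/N) with hFu
    -- hfv : (N:ℝ) * Fv = Real.log Pv ; hfu similarly
    have hC1' : Fv ≤ Real.log ((11:ℝ)/4) := by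
      have hlog := Real.log_le_log hPvpos hC1
      rw [← hfv, Real.log_pow] at hlog
      exact le_of_mul_le_mul_left (by linarith [hlog] : (N:ℝ) * Fv ≤ (N:ℝ) * Real.log ((11:ℝ)/4)) hNR
    have hC2' : ((pw:ℝ)/N - (pu:ℝ)/N)*Fv - ((pw:ℝ)/N - (pv:ℝ)/N)*Fu
        ≤ ((pv:ℝ)/N - (pu:ℝ)/N)*Real.log ((11:ℝ)/4) := by
      have hlog := Real.log_le_log (pow_pos hPvpos A) hC2
      rw [Real.log_pow, Real.log_mul (pow_ne_zero _ (by norm_num : ((11:ℝ)/4) ≠ 0))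
        (pow_ne_zero _ hPupos.ne'), Real.log_pow, Real.log_pow, ← hfv, ← hfu] at hlog
      have hke : (A:ℝ)*Fv - (B:ℝ)*Fu ≤ (C:ℝ)*Real.log ((11:ℝ)/4) := by
        have h2 : (N:ℝ) * ((A:ℝ)*Fv) ≤ (N:ℝ) * ((C:ℝ)*Real.log ((11:ℝ)/4) + (B:ℝ)*Fu) := by
          push_cast at hlog
          linarith [hlog]
        have h3 := le_of_mul_le_mul_left h2 hNR
        linarith
      have hA' : (pw:ℝ) = (pu:ℝ) + A := by exact_mod_cast hAd.symm
      have hB' : (pw:ℝ) = (pv:ℝ) + B := by exact_mod_cast hBd.symm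
      have hC' : (pv:ℝ) = (pu:ℝ) + C := by exact_mod_cast hCd.symm
      have e1 : (pw:ℝ)/N - (pu:ℝ)/N = (A:ℝ)/N := by rw [hA']; ring
      have e2 : (pw:ℝ)/N - (pv:ℝ)/N = (B:ℝ)/N := by rw [hB']; ring
      have e3 : (pv:ℝ)/N - (pu:ℝ)/N = (C:ℝ)/N := by rw [hC']; ring
      rw [e1, e2, e3]
      calc (A:ℝ)/N*Fv - (B:ℝ)/N*Fu = ((A:ℝ)*Fv - (B:ℝ)*Fu)/N := by ring
        _ ≤ ((C:ℝ)*Real.log ((11:ℝ)/4))/N := (div_le_div_iff_of_pos_right hNR).mpr hke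
        _ = (C:ℝ)/N*Real.log ((11:ℝ)/4) := by ring
    have huvlt : (pu:ℝ)/N < (pv:ℝ)/N :=
      (div_lt_div_iff_of_pos_right hNR).mpr (by exact_mod_cast (by omega : pu < pv))
    have hvwlt : (pv:ℝ)/N < (pw:ℝ)/N :=
      (div_lt_div_iff_of_pos_right hNR).mpr (by exact_mod_cast (by omega : pv < pw))
    exact secant_bound hc (by positivity : (0:ℝ) ≤ (pu:ℝ)/N)
      (by rw [div_le_one hNR]; exact_mod_cast hwN)
      huvlt hvwlt hC1' hC2' t hvt htw
lemma key_lemma (t : ℝ) (h0 : 0 < t) (h1 : t < 1) :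
    ∃ x₀ : ℝ, 0 < x₀ ∧ x₀ < 1 ∧ ((4:ℝ)/11) ≤ x₀ ^ (2*(1-t)) ∧
      2*t*Real.log (1+x₀) + Real.binEntropy t ≤ Real.log ((11:ℝ)/4) := by
  rcases le_or_gt t (1/3) with hL|hL
  · refine ⟨151/250, by norm_num, by norm_num, ?_, ?_⟩
    · calc (4:ℝ)/11 ≤ ((151:ℝ)/250) ^ (2:ℕ) := by norm_num
        _ = ((151:ℝ)/250) ^ ((2:ℕ):ℝ) := (Real.rpow_natCast _ 2).symm
        _ ≤ ((151:ℝ)/250) ^ (2*(1-t)) := by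
            apply Real.rpow_le_rpow_of_exponent_ge (by norm_num) (by norm_num)
            push_cast
            linarith
    · have hbe := Real.binEntropy_le_log_two (p := t)
      have hcl : 0 ≤ Real.log (1+(151:ℝ)/250) := Real.log_nonneg (by norm_num)
      have h2t : 2*t*Real.log (1+(151:ℝ)/250) ≤ (2/3)*Real.log (1+(151:ℝ)/250) := by
        apply mul_le_mul_of_nonneg_right _ hcl
        linarith
      have hnum : 3*Real.log 2 + 2*Real.log (1+(151:ℝ)/250) ≤ 3*Real.log ((11:ℝ)/4) := by
        have hl := Real.log_le_log (by norm_num : (0:ℝ) < 2^3 * (1+(151:ℝ)/250)^2)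
          (by norm_num : (2:ℝ)^3 * (1+(151:ℝ)/250)^2 ≤ ((11:ℝ)/4)^3)
        rw [Real.log_mul (by norm_num) (by norm_num), Real.log_pow, Real.log_pow, Real.log_pow] at hl
        push_cast at hl
        linarith
      linarith
  rcases le_or_gt t (197/480) with h1|h1
  · -- piece 1: (1/3, 197/480]
    obtain ⟨hA, hB⟩ := piece_lemma 480 152 160 197 328 320 45 37 8 9367 20000 (by norm_num) (by norm_num) (by norm_num) (by norm_num) (by norm_num) (by norm_num) (by norm_num) (by norm_num) (by norm_num) (by norm_num) (by norm_num) (by norm_num [pow_split]) (by norm_num [pow_split]) (by norm_num [pow_split]) t (by push_cast; norm_num; linarith) (by push_cast; norm_num; linarith)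
    exact ⟨(((9367:ℕ):ℝ))/((20000:ℕ):ℝ), by norm_num, by norm_num, hA, hB⟩
  rcases le_or_gt t (43/96) with h2|h2
  · -- piece 2: (197/480, 43/96]
    obtain ⟨hA, hB⟩ := piece_lemma 480 189 197 215 291 283 26 18 8 8483 20000 (by norm_num) (by norm_num) (by norm_num) (by norm_num) (by norm_num) (by norm_num) (by norm_num) (by norm_num) (by norm_num) (by norm_num) (by norm_num) (by norm_num [pow_split]) (by norm_num [pow_split]) (by norm_num [pow_split]) t (by push_cast; norm_num; linarith) (by push_cast; norm_num; linarith)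
    exact ⟨(((8483:ℕ):ℝ))/((20000:ℕ):ℝ), by norm_num, by norm_num, hA, hB⟩
  rcases le_or_gt t (15/32) with h3|h3
  · -- piece 3: (43/96, 15/32]
    obtain ⟨hA, hB⟩ := piece_lemma 480 207 215 225 273 265 18 10 8 4001 10000 (by norm_num) (by norm_num) (by norm_num) (by norm_num) (by norm_num) (by norm_num) (by norm_num) (by norm_num) (by norm_num) (by norm_num) (by norm_num) (by norm_num [pow_split]) (by norm_num [pow_split]) (by norm_num [pow_split]) t (by push_cast; norm_num; linarith) (by push_cast; norm_num; linarith)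
    exact ⟨(((4001:ℕ):ℝ))/((10000:ℕ):ℝ), by norm_num, by norm_num, hA, hB⟩
  rcases le_or_gt t (29/60) with h4|h4
  · -- piece 4: (15/32, 29/60]
    obtain ⟨hA, hB⟩ := piece_lemma 480 217 225 232 263 255 15 7 8 193 500 (by norm_num) (by norm_num) (by norm_num) (by norm_num) (by norm_num) (by norm_num) (by norm_num) (by norm_num) (by norm_num) (by norm_num) (by norm_num) (by norm_num [pow_split]) (by norm_num [pow_split]) (by norm_num [pow_split]) t (by push_cast; norm_num; linarith) (by push_cast; norm_num; linarith)
    exact ⟨(((193:ℕ):ℝ))/((500:ℕ):ℝ), by norm_num, by norm_num, hA, hB⟩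
  rcases le_or_gt t (79/160) with h5|h5
  · -- piece 5: (29/60, 79/160]
    obtain ⟨hA, hB⟩ := piece_lemma 480 224 232 237 256 248 13 5 8 1503 4000 (by norm_num) (by norm_num) (by norm_num) (by norm_num) (by norm_num) (by norm_num) (by norm_num) (by norm_num) (by norm_num) (by norm_num) (by norm_num) (by norm_num [pow_split]) (by norm_num [pow_split]) (by norm_num [pow_split]) t (by push_cast; norm_num; linarith) (by push_cast; norm_num; linarith)
    exact ⟨(((1503:ℕ):ℝ))/((4000:ℕ):ℝ), by norm_num, by norm_num, hA, hB⟩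
  rcases le_or_gt t (241/480) with h6|h6
  · -- piece 6: (79/160, 241/480]
    obtain ⟨hA, hB⟩ := piece_lemma 480 229 237 241 251 243 12 4 8 3683 10000 (by norm_num) (by norm_num) (by norm_num) (by norm_num) (by norm_num) (by norm_num) (by norm_num) (by norm_num) (by norm_num) (by norm_num) (by norm_num) (by norm_num [pow_split]) (by norm_num [pow_split]) (by norm_num [pow_split]) t (by push_cast; norm_num; linarith) (by push_cast; norm_num; linarith)
    exact ⟨(((3683:ℕ):ℝ))/((10000:ℕ):ℝ), by norm_num, by norm_num, hA, hB⟩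
  rcases le_or_gt t (49/96) with h7|h7
  · -- piece 7: (241/480, 49/96]
    obtain ⟨hA, hB⟩ := piece_lemma 480 233 241 245 247 239 12 4 8 1811 5000 (by norm_num) (by norm_num) (by norm_num) (by norm_num) (by norm_num) (by norm_num) (by norm_num) (by norm_num) (by norm_num) (by norm_num) (by norm_num) (by norm_num [pow_split]) (by norm_num [pow_split]) (by norm_num [pow_split]) t (by push_cast; norm_num; linarith) (by push_cast; norm_num; linarith)
    exact ⟨(((1811:ℕ):ℝ))/((5000:ℕ):ℝ), by norm_num, by norm_num, hA, hB⟩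
  rcases le_or_gt t (83/160) with h8|h8
  · -- piece 8: (49/96, 83/160]
    obtain ⟨hA, hB⟩ := piece_lemma 480 237 245 249 243 235 12 4 8 7119 20000 (by norm_num) (by norm_num) (by norm_num) (by norm_num) (by norm_num) (by norm_num) (by norm_num) (by norm_num) (by norm_num) (by norm_num) (by norm_num) (by norm_num [pow_split]) (by norm_num [pow_split]) (by norm_num [pow_split]) t (by push_cast; norm_num; linarith) (by push_cast; norm_num; linarith)
    exact ⟨(((7119:ℕ):ℝ))/((20000:ℕ):ℝ), by norm_num, by norm_num, hA, hB⟩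
  rcases le_or_gt t (127/240) with h9|h9
  · -- piece 9: (83/160, 127/240]
    obtain ⟨hA, hB⟩ := piece_lemma 480 241 249 254 239 231 13 5 8 6993 20000 (by norm_num) (by norm_num) (by norm_num) (by norm_num) (by norm_num) (by norm_num) (by norm_num) (by norm_num) (by norm_num) (by norm_num) (by norm_num) (by norm_num [pow_split]) (by norm_num [pow_split]) (by norm_num [pow_split]) t (by push_cast; norm_num; linarith) (by push_cast; norm_num; linarith)
    exact ⟨(((6993:ℕ):ℝ))/((20000:ℕ):ℝ), by norm_num, by norm_num, hA, hB⟩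
  rcases le_or_gt t (13/24) with h10|h10
  · -- piece 10: (127/240, 13/24]
    obtain ⟨hA, hB⟩ := piece_lemma 480 246 254 260 234 226 14 6 8 427 1250 (by norm_num) (by norm_num) (by norm_num) (by norm_num) (by norm_num) (by norm_num) (by norm_num) (by norm_num) (by norm_num) (by norm_num) (by norm_num) (by norm_num [pow_split]) (by norm_num [pow_split]) (by norm_num [pow_split]) t (by push_cast; norm_num; linarith) (by push_cast; norm_num; linarith)
    exact ⟨(((427:ℕ):ℝ))/((1250:ℕ):ℝ), by norm_num, by norm_num, hA, hB⟩
  rcases le_or_gt t (9/16) with h11|h11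
  · -- piece 11: (13/24, 9/16]
    obtain ⟨hA, hB⟩ := piece_lemma 480 252 260 270 228 220 18 10 8 1327 4000 (by norm_num) (by norm_num) (by norm_num) (by norm_num) (by norm_num) (by norm_num) (by norm_num) (by norm_num) (by norm_num) (by norm_num) (by norm_num) (by norm_num [pow_split]) (by norm_num [pow_split]) (by norm_num [pow_split]) t (by push_cast; norm_num; linarith) (by push_cast; norm_num; linarith)
    exact ⟨(((1327:ℕ):ℝ))/((4000:ℕ):ℝ), by norm_num, by norm_num, hA, hB⟩
  rcases le_or_gt t (49/80) with h12|h12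
  · -- piece 12: (9/16, 49/80]
    obtain ⟨hA, hB⟩ := piece_lemma 480 262 270 294 218 210 32 24 8 787 2500 (by norm_num) (by norm_num) (by norm_num) (by norm_num) (by norm_num) (by norm_num) (by norm_num) (by norm_num) (by norm_num) (by norm_num) (by norm_num) (by norm_num [pow_split]) (by norm_num [pow_split]) (by norm_num [pow_split]) t (by push_cast; norm_num; linarith) (by push_cast; norm_num; linarith)
    exact ⟨(((787:ℕ):ℝ))/((2500:ℕ):ℝ), by norm_num, by norm_num, hA, hB⟩
  rcases le_or_gt t (31/48) with h13|h13
  · -- piece 13: (49/80, 31/48]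
    obtain ⟨hA, hB⟩ := piece_lemma 480 284 294 310 196 186 26 16 10 543 2000 (by norm_num) (by norm_num) (by norm_num) (by norm_num) (by norm_num) (by norm_num) (by norm_num) (by norm_num) (by norm_num) (by norm_num) (by norm_num) (by norm_num [pow_split]) (by norm_num [pow_split]) (by norm_num [pow_split]) t (by push_cast; norm_num; linarith) (by push_cast; norm_num; linarith)
    exact ⟨(((543:ℕ):ℝ))/((2000:ℕ):ℝ), by norm_num, by norm_num, hA, hB⟩
  rcases le_or_gt t (17/24) with h14|h14
  · -- piece 14: (31/48, 17/24]
    obtain ⟨hA, hB⟩ := piece_lemma 480 300 310 340 180 170 40 30 10 961 4000 (by norm_num) (by norm_num) (by norm_num) (by norm_num) (by norm_num) (by norm_num) (by norm_num) (by norm_num) (by norm_num) (by norm_num) (by norm_num) (by norm_num [pow_split]) (by norm_num [pow_split]) (by norm_num [pow_split]) t (by push_cast; norm_num; linarith) (by push_cast; norm_num; linarith)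
    exact ⟨(((961:ℕ):ℝ))/((4000:ℕ):ℝ), by norm_num, by norm_num, hA, hB⟩
  rcases le_or_gt t (37/48) with h15|h15
  · -- piece 15: (17/24, 37/48]
    obtain ⟨hA, hB⟩ := piece_lemma 480 330 340 370 150 140 40 30 10 177 1000 (by norm_num) (by norm_num) (by norm_num) (by norm_num) (by norm_num) (by norm_num) (by norm_num) (by norm_num) (by norm_num) (by norm_num) (by norm_num) (by norm_num [pow_split]) (by norm_num [pow_split]) (by norm_num [pow_split]) t (by push_cast; norm_num; linarith) (by push_cast; norm_num; linarith)
    exact ⟨(((177:ℕ):ℝ))/((1000:ℕ):ℝ), by norm_num, by norm_num, hA, hB⟩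
  rcases le_or_gt t (5/6) with h16|h16
  · -- piece 16: (37/48, 5/6]
    obtain ⟨hA, hB⟩ := piece_lemma 480 360 370 400 120 110 40 30 10 221 2000 (by norm_num) (by norm_num) (by norm_num) (by norm_num) (by norm_num) (by norm_num) (by norm_num) (by norm_num) (by norm_num) (by norm_num) (by norm_num) (by norm_num [pow_split]) (by norm_num [pow_split]) (by norm_num [pow_split]) t (by push_cast; norm_num; linarith) (by push_cast; norm_num; linarith)
    exact ⟨(((221:ℕ):ℝ))/((2000:ℕ):ℝ), by norm_num, by norm_num, hA, hB⟩
  · -- piece 17: (5/6, 1)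
    obtain ⟨hA, hB⟩ := piece_lemma 480 390 400 480 90 80 90 80 10 97 2000 (by norm_num) (by norm_num) (by norm_num) (by norm_num) (by norm_num) (by norm_num) (by norm_num) (by norm_num) (by norm_num) (by norm_num) (by norm_num) (by norm_num [pow_split]) (by norm_num [pow_split]) (by norm_num [pow_split]) t (by push_cast; norm_num; linarith) (by push_cast; norm_num; linarith)
    exact ⟨(((97:ℕ):ℝ))/((2000:ℕ):ℝ), by norm_num, by norm_num, hA, hB⟩

end AuxiliaryLemmas

/-- Inequality 3.7: any feasible point of the improved optimization problem
satisfies `∏_{i=1}^k p_i ≤ (11k/4)^{k/2} p_{k+ℓ}^{k-ℓ} p_k^ℓ`. -/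
theorem imp_opt_relaxed_constraint (n : ℕ) (p : ℕ → ℝ) (hp : ImpOptFeasible n p)
    (k ℓ : ℕ) (hk2 : 2 ≤ k) (hkn : k + 1 ≤ n) (hℓ1 : 1 ≤ ℓ) (hℓk : ℓ + 1 ≤ k)
    (hkℓ : k + ℓ ≤ n) :
    ∏ i ∈ Finset.Icc 1 k, p i ≤
      (11 * (k : ℝ) / 4) ^ ((k : ℝ) / 2) * p (k + ℓ) ^ (k - ℓ) * p k ^ ℓ := by
  obtain ⟨hpos, hW, hC3⟩ := hp
  have hKR : (2:ℝ) ≤ (k:ℝ) := by exact_mod_cast hk2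
  have hLR : (1:ℝ) ≤ (ℓ:ℝ) := by exact_mod_cast hℓ1
  have hlk : ℓ < k := by omega
  have hmk : ℓ + (k - ℓ) = k := by omega
  have hmR : ((k - ℓ : ℕ):ℝ) = (k:ℝ) - (ℓ:ℝ) := by
    push_cast [Nat.cast_sub hlk.le]
    ring
  have hm1 : (1:ℝ) ≤ (k:ℝ) - (ℓ:ℝ) := by
    have h := hℓk
    have : (ℓ:ℝ) + 1 ≤ (k:ℝ) := by exact_mod_cast h
    linarith
  have hK0 : (0:ℝ) < (k:ℝ) := by linarith
  have ht0 : 0 < (ℓ:ℝ)/(k:ℝ) := by positivity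
  have ht1 : (ℓ:ℝ)/(k:ℝ) < 1 := by
    rw [div_lt_one hK0]
    exact_mod_cast hlk
  obtain ⟨x₀, hx0, hx1, hA, hB⟩ := key_lemma ((ℓ:ℝ)/(k:ℝ)) ht0 ht1
  have ha : 0 < p k := hpos k (by omega) (by omega)
  have hb : 0 < p (k + ℓ) := hpos (k+ℓ) (by omega) hkℓ
  have hT : (11 * (k:ℝ) / 4) ^ ((k:ℝ)/2) = ((11:ℝ)/4)^((k:ℝ)/2) * (k:ℝ)^((k:ℝ)/2) := by
    rw [show 11 * (k:ℝ) / 4 = (11/4) * (k:ℝ) by ring,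
      Real.mul_rpow (by norm_num) hK0.le]
  have h1194 : (0:ℝ) < ((11:ℝ)/4)^((k:ℝ)/2) := Real.rpow_pos_of_pos (by norm_num) _
  have hKK2 : (0:ℝ) < (k:ℝ)^((k:ℝ)/2) := Real.rpow_pos_of_pos hK0 _
  rcases le_or_gt (x₀ * p k) (p (k + ℓ)) with hcase|hcase
  · -- Wilkinson case
    have hxm : ((4:ℝ)/11) ^ ((k:ℝ)/2) ≤ x₀ ^ (k - ℓ : ℕ) := by
      have h2 := Real.rpow_le_rpow (by norm_num) hA (by positivity : (0:ℝ) ≤ (k:ℝ)/2)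
      rw [← Real.rpow_mul hx0.le] at h2
      rw [← Real.rpow_natCast x₀ (k - ℓ), hmR]
      calc ((4:ℝ)/11) ^ ((k:ℝ)/2) ≤ x₀ ^ ((2*(1 - (ℓ:ℝ)/(k:ℝ))) * ((k:ℝ)/2)) := h2
        _ = x₀ ^ ((k:ℝ) - (ℓ:ℝ)) := by
            congr 1
            field_simp
    have hprod : ((11:ℝ)/4)^((k:ℝ)/2) * ((4:ℝ)/11)^((k:ℝ)/2) = 1 := by
      rw [← Real.mul_rpow (by norm_num) (by norm_num)]
      norm_num
    have h1 := hW k (by omega) (by omega)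
    have h2 : p k ≤ p (k+ℓ) / x₀ := by
      rw [le_div_iff₀ hx0]
      nlinarith [hcase]
    have h3 : p k ^ k = p k ^ ℓ * p k ^ (k - ℓ) := by rw [← pow_add, hmk]
    have h4 : p k ^ (k-ℓ) ≤ (p (k+ℓ) / x₀) ^ (k-ℓ) := pow_le_pow_left₀ ha.le h2 _
    have hconst : (k:ℝ)^((k:ℝ)/2) / x₀ ^ (k-ℓ) ≤ ((11:ℝ)/4)^((k:ℝ)/2) * (k:ℝ)^((k:ℝ)/2) := by
      rw [div_le_iff₀ (by positivity)]
      calc (k:ℝ)^((k:ℝ)/2)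
          = (k:ℝ)^((k:ℝ)/2) * (((11:ℝ)/4)^((k:ℝ)/2) * ((4:ℝ)/11)^((k:ℝ)/2)) := by
            rw [hprod]; ring
        _ ≤ (k:ℝ)^((k:ℝ)/2) * (((11:ℝ)/4)^((k:ℝ)/2) * x₀ ^ (k-ℓ)) := by
            apply mul_le_mul_of_nonneg_left _ hKK2.le
            exact mul_le_mul_of_nonneg_left hxm h1194.le
        _ = ((11:ℝ)/4)^((k:ℝ)/2) * (k:ℝ)^((k:ℝ)/2) * x₀ ^ (k-ℓ) := by ring
    calc ∏ i ∈ Finset.Icc 1 k, p i ≤ (k:ℝ)^((k:ℝ)/2) * p k ^ k := h1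
      _ = (k:ℝ)^((k:ℝ)/2) * (p k ^ ℓ * p k ^ (k-ℓ)) := by rw [h3]
      _ ≤ (k:ℝ)^((k:ℝ)/2) * (p k ^ ℓ * (p (k+ℓ)/x₀) ^ (k-ℓ)) := by
          apply mul_le_mul_of_nonneg_left _ hKK2.le
          exact mul_le_mul_of_nonneg_left h4 (by positivity)
      _ = ((k:ℝ)^((k:ℝ)/2) / x₀ ^ (k-ℓ)) * (p (k+ℓ) ^ (k-ℓ) * p k ^ ℓ) := by
          rw [div_pow]
          ring
      _ ≤ (((11:ℝ)/4)^((k:ℝ)/2) * (k:ℝ)^((k:ℝ)/2)) * (p (k+ℓ) ^ (k-ℓ) * p k ^ ℓ) :=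
          mul_le_mul_of_nonneg_right hconst (by positivity)
      _ = (11 * (k:ℝ)/4) ^ ((k:ℝ)/2) * p (k+ℓ) ^ (k-ℓ) * p k ^ ℓ := by
          rw [hT]; ring
  · -- improved constraint case
    have h1 := hC3 k ℓ hk2 hkn hℓ1 hℓk hkℓ
    set K := (k:ℝ) with hKdef
    set L := (ℓ:ℝ) with hLdef
    have hKL0 : (0:ℝ) < K - L := by linarith
    have hL0 : (0:ℝ) < L := by linarith
    have hD0 : (0:ℝ) < (K - L) ^ ((K - L)/2) * L ^ (L/2) :=
      mul_pos (Real.rpow_pos_of_pos hKL0 _) (Real.rpow_pos_of_pos hL0 _)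
    have hKK : (0:ℝ) < K ^ K := Real.rpow_pos_of_pos hK0 _
    have h1x : (0:ℝ) < 1 + x₀ := by linarith
    have hab : p k + p (k+ℓ) ≤ (1+x₀) * p k := by nlinarith [hcase]
    have h5 : (p k + p (k+ℓ)) ^ ℓ ≤ (1+x₀)^ℓ * p k ^ ℓ := by
      rw [← mul_pow]
      exact pow_le_pow_left₀ (by positivity) hab _
    have hS : K ^ K * (1+x₀) ^ ℓ / ((K-L)^((K-L)/2) * L^(L/2)) ≤ ((11:ℝ)/4)^(K/2) * K^(K/2) := by
      rw [← Real.log_le_log_iff (by positivity) (by positivity)]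
      rw [Real.log_div (by positivity) hD0.ne',
        Real.log_mul hKK.ne' (by positivity),
        Real.log_mul (Real.rpow_pos_of_pos hKL0 _).ne' (Real.rpow_pos_of_pos hL0 _).ne',
        Real.log_mul h1194.ne' hKK2.ne',
        Real.log_rpow hK0, Real.log_rpow hKL0, Real.log_rpow hL0,
        Real.log_rpow (by norm_num : (0:ℝ) < (11:ℝ)/4), Real.log_rpow hK0,
        Real.log_pow]
      have hbe : Real.binEntropy (L/K)
          = (L/K)*(Real.log K - Real.log L) + ((K-L)/K)*(Real.log K - Real.log (K-L)) := by
        rw [Real.binEntropy, show 1 - L/K = (K-L)/K by field_simp, inv_div, inv_div,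
          Real.log_div hK0.ne' hL0.ne', Real.log_div hK0.ne' hKL0.ne']
      rw [hbe] at hB
      have hB2 := mul_le_mul_of_nonneg_left hB hK0.le
      have e : K * (2*(L/K)*Real.log (1+x₀) + ((L/K)*(Real.log K - Real.log L)
            + ((K-L)/K)*(Real.log K - Real.log (K-L))))
          = 2*L*Real.log (1+x₀) + L*(Real.log K - Real.log L)
            + (K-L)*(Real.log K - Real.log (K-L)) := by
        field_simp
        ring
      rw [e] at hB2
      linarith [hB2]
    calc ∏ i ∈ Finset.Icc 1 k, p i
        ≤ K ^ K * p (k+ℓ) ^ (k-ℓ) * (p k + p (k+ℓ)) ^ ℓ / ((K-L)^((K-L)/2) * L^(L/2)) := h1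
      _ ≤ K ^ K * p (k+ℓ) ^ (k-ℓ) * ((1+x₀)^ℓ * p k ^ ℓ) / ((K-L)^((K-L)/2) * L^(L/2)) := by
          gcongr
      _ = (K ^ K * (1+x₀) ^ ℓ / ((K-L)^((K-L)/2) * L^(L/2))) * (p (k+ℓ) ^ (k-ℓ) * p k ^ ℓ) := by
          ring
      _ ≤ (((11:ℝ)/4)^(K/2) * K^(K/2)) * (p (k+ℓ) ^ (k-ℓ) * p k ^ ℓ) :=
          mul_le_mul_of_nonneg_right hS (by positivity)
      _ = (11 * K/4) ^ (K/2) * p (k+ℓ) ^ (k-ℓ) * p k ^ ℓ := by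
          rw [hT]; ring
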